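/- Fix an integer n ≥ 3 and natural numbers m_P, m_F with m_P + m_F ≥ 2. There exists a real number M, depending only on n, m_P, and m_F, with the following property: for any even integers k_1, …, k_{m_P} ≥ 4 and any Deligne-bounded cusp sequences a_1, …, a_{m_F} : ℕ → ℂ of even weights ℓ_1, …, ℓ_{m_F} (each ℓ_i ≥ 12), if the total weight ℓ = k_1 + ⋯ + k_{m_P} + ℓ_1 + ⋯ + ℓ_{m_F} satisfies ℓ > M, then the Cauchy convolution of all these sequences satisfies |(e_{k_1} ∗ ⋯ ∗ e_{k_{m_P}} ∗ a_1 ∗ ⋯ ∗ a_{m_F})(n)| ≤ n^{ℓ/2 − 1}. -/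

import Mathlib

/-- The `q`-coefficient constant of the weight `k` Eisenstein series:
`C_k = (2πi)^k / ((k-1)! ζ(k))`. -/
noncomputable def eisC (k : ℕ) : ℂ :=
  (2 * Real.pi * Complex.I) ^ k / ((Nat.factorial (k - 1) : ℂ) * riemannZeta k)

/-- The `q`-expansion of the normalized weight `k` Eisenstein series, as a formal power
series: constant coefficient `1`, and `n`-th coefficient `C_k σ_{k-1}(n)` for `n ≥ 1`. -/
noncomputable def eisPS (k : ℕ) : PowerSeries ℂ :=
  PowerSeries.mk fun n => if n = 0 then 1 else eisC k * ∑ d ∈ n.divisors, (d : ℂ) ^ (k - 1)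

/-- `a : ℕ → ℂ` is a Deligne-bounded cusp sequence of weight `ℓ` if `ℓ` is an even
integer `≥ 12`, `a 0 = 0`, and `|a n| ≤ 2 n^(ℓ/2)` for all `n ≥ 1`. -/
def IsDeligneCusp (a : ℕ → ℂ) (ℓ : ℕ) : Prop :=
  Even ℓ ∧ 12 ≤ ℓ ∧ a 0 = 0 ∧
    ∀ n : ℕ, 1 ≤ n → ‖a n‖ ≤ 2 * (n : ℝ) ^ ((ℓ : ℝ) / 2)

open scoped BigOperators Real

noncomputable def Complex.abs : AbsoluteValue ℂ ℝ where
  toFun z := ‖z‖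
  map_mul' := norm_mul
  nonneg' := norm_nonneg
  eq_zero' _ := norm_eq_zero
  add_le' := norm_add_le

lemma Complex.abs_apply (z : ℂ) : Complex.abs z = ‖z‖ := rfl

lemma one_le_abs_zeta (k : ℕ) (hk : 2 ≤ k) : 1 ≤ Complex.abs (riemannZeta k) := by
  have hre : 1 < (k : ℂ).re := by
    simp only [Complex.natCast_re]
    exact_mod_cast hk
  have hz := zeta_eq_tsum_one_div_nat_add_one_cpow hre
  have hterm : ∀ m : ℕ, (1 / ((m : ℂ) + 1) ^ (k : ℂ)) = ((1 / ((m : ℝ) + 1) ^ k : ℝ) : ℂ) := by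
    intro m
    rw [show ((m : ℂ) + 1) = (((m + 1 : ℕ) : ℝ) : ℂ) by push_cast; ring, Complex.cpow_natCast]
    push_cast
    ring
  have hsum : Summable (fun m : ℕ => 1 / ((m : ℝ) + 1) ^ k) := by
    have := (summable_nat_add_iff (f := fun m : ℕ => 1 / (m : ℝ) ^ k) 1).mpr
      (Real.summable_one_div_nat_pow.mpr hk)
    refine this.congr fun m => by push_cast; ring_nf
  have hz2 : riemannZeta k = ((∑' m : ℕ, 1 / ((m : ℝ) + 1) ^ k : ℝ) : ℂ) := by
    rw [hz, Complex.ofReal_tsum]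
    exact tsum_congr fun m => (hterm m)
  rw [hz2, Complex.abs_apply, Complex.norm_real, Real.norm_eq_abs]
  have h1 : (1 : ℝ) ≤ ∑' m : ℕ, 1 / ((m : ℝ) + 1) ^ k := by
    have := Summable.le_tsum hsum 0 (fun j _ => by positivity)
    simpa using this
  exact le_trans h1 (le_abs_self _)

noncomputable def eisBound (n : ℕ) : ℝ := 1 + 2 * π * n * Real.exp (2 * π * n)

lemma one_le_eisBound (n : ℕ) : 1 ≤ eisBound n := by
  have : (0:ℝ) ≤ 2 * π * n * Real.exp (2 * π * n) := by positivity
  simp [eisBound]; linarith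

lemma abs_eisC_le (k : ℕ) (hk : 4 ≤ k) :
    Complex.abs (eisC k) ≤ (2 * π) ^ k / (Nat.factorial (k - 1)) := by
  have hz := one_le_abs_zeta k (by omega)
  have hfac : (0:ℝ) < (Nat.factorial (k-1) : ℝ) := by positivity
  rw [eisC, map_div₀, map_mul, map_pow, map_mul, map_mul, Complex.abs_apply, Complex.abs_apply, Complex.abs_apply, Complex.abs_apply,
    Complex.abs_apply, Complex.norm_I,
    Complex.norm_two, Complex.norm_real, Real.norm_eq_abs, Complex.norm_natCast, abs_of_pos Real.pi_pos,
    mul_one]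
  refine div_le_div_of_nonneg_left (by positivity) hfac ?_
  nlinarith [show 1 ≤ ‖riemannZeta k‖ from hz]

lemma abs_coeff_eisPS_le (n : ℕ) (hn : 1 ≤ n) (k : ℕ) (hk : 4 ≤ k) (j : ℕ) (hj : j ≤ n) :
    Complex.abs (PowerSeries.coeff (R := ℂ) j (eisPS k)) ≤ eisBound n := by
  rw [eisPS, PowerSeries.coeff_mk]
  rcases eq_or_ne j 0 with rfl | hj0
  · simp [one_le_eisBound n]
  · rw [if_neg hj0, map_mul]
    -- bound the divisor sum by n^k
    have hdiv : Complex.abs (∑ d ∈ j.divisors, (d : ℂ) ^ (k - 1)) ≤ (n : ℝ) ^ k := by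
      calc Complex.abs (∑ d ∈ j.divisors, (d : ℂ) ^ (k - 1))
          ≤ ∑ d ∈ j.divisors, Complex.abs ((d : ℂ) ^ (k - 1)) := by
            exact AbsoluteValue.sum_le _ _ _
        _ ≤ ∑ _d ∈ j.divisors, (n : ℝ) ^ (k - 1) := by
            refine Finset.sum_le_sum fun d hd => ?_
            rw [map_pow, Complex.abs_apply, Complex.norm_natCast]
            have hdn : d ≤ n := le_trans (Nat.le_of_dvd (Nat.pos_of_ne_zero hj0)
              (Nat.mem_divisors.mp hd).1) hj
            exact pow_le_pow_left₀ (by positivity) (by exact_mod_cast hdn) _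
        _ = (j.divisors.card : ℝ) * (n : ℝ) ^ (k - 1) := by
            rw [Finset.sum_const, nsmul_eq_mul]
        _ ≤ (n : ℝ) * (n : ℝ) ^ (k - 1) := by
            have hcard : j.divisors.card ≤ n := by
              have hsub : j.divisors ⊆ Finset.Icc 1 j := by
                intro d hd
                rw [Finset.mem_Icc]
                exact ⟨Nat.pos_of_mem_divisors hd, Nat.le_of_dvd (Nat.pos_of_ne_zero hj0)
                  (Nat.mem_divisors.mp hd).1⟩
              calc j.divisors.card ≤ (Finset.Icc 1 j).card := Finset.card_le_card hsub
                _ = j := by rw [Nat.card_Icc]; omega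
                _ ≤ n := hj
            have h1 : (0:ℝ) ≤ (n:ℝ)^(k-1) := by positivity
            have h2 : (j.divisors.card : ℝ) ≤ (n : ℝ) := by exact_mod_cast hcard
            exact mul_le_mul_of_nonneg_right h2 h1
        _ = (n : ℝ) ^ k := by
            rw [← pow_succ']
            congr 1
            omega
    calc Complex.abs (eisC k) * Complex.abs (∑ d ∈ j.divisors, (d : ℂ) ^ (k - 1))
        ≤ ((2 * π) ^ k / (Nat.factorial (k - 1))) * (n : ℝ) ^ k := by
          exact mul_le_mul (abs_eisC_le k hk) hdiv (by positivity)
            (by positivity)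
      _ = (2 * π * n) ^ k / (Nat.factorial (k - 1)) := by
          rw [mul_pow]
          ring
      _ = (2 * π * n) * ((2 * π * n) ^ (k-1) / (Nat.factorial (k - 1))) := by
          rw [← mul_div_assoc, ← pow_succ']
          congr 2
          omega
      _ ≤ (2 * π * n) * Real.exp (2 * π * n) := by
          refine mul_le_mul_of_nonneg_left ?_ (by positivity)
          exact Real.pow_div_factorial_le_exp _ (by positivity) _
      _ ≤ eisBound n := by rw [eisBound]; linarith

lemma coeff_prod_le {ι : Type*} (n : ℕ) (s : Finset ι) (f : ι → PowerSeries ℂ)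
    (c α : ι → ℝ) (hc : ∀ i ∈ s, 0 ≤ c i) (hα : ∀ i ∈ s, 0 ≤ α i)
    (h : ∀ i ∈ s, ∀ j : ℕ, j ≤ n → Complex.abs (PowerSeries.coeff (R := ℂ) j (f i)) ≤ c i * (j : ℝ) ^ (α i)) :
    ∀ p : ℕ, p ≤ n → Complex.abs (PowerSeries.coeff (R := ℂ) p (∏ i ∈ s, f i)) ≤
      (∏ i ∈ s, (((n : ℝ) + 1) * c i)) * (p : ℝ) ^ (∑ i ∈ s, α i) := by
  induction s using Finset.cons_induction with
  | empty =>
      intro p hp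
      rw [Finset.prod_empty, Finset.prod_empty, Finset.sum_empty, Real.rpow_zero,
        PowerSeries.coeff_one]
      split <;> simp
  | cons a s ha ih =>
      intro p hp
      have hca : 0 ≤ c a := hc a (Finset.mem_cons_self a s)
      have hαa : 0 ≤ α a := hα a (Finset.mem_cons_self a s)
      have hαs : 0 ≤ ∑ i ∈ s, α i :=
        Finset.sum_nonneg fun i hi => hα i (Finset.mem_cons_of_mem hi)
      have hprod : 0 ≤ ∏ i ∈ s, (((n : ℝ) + 1) * c i) :=
        Finset.prod_nonneg fun i hi => by
          have := hc i (Finset.mem_cons_of_mem hi); positivity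
      rw [Finset.prod_cons, Finset.sum_cons, Finset.prod_cons, PowerSeries.coeff_mul]
      calc Complex.abs (∑ x ∈ Finset.HasAntidiagonal.antidiagonal p,
              PowerSeries.coeff (R := ℂ) x.1 (f a) * PowerSeries.coeff (R := ℂ) x.2 (∏ i ∈ s, f i))
          ≤ ∑ x ∈ Finset.HasAntidiagonal.antidiagonal p, Complex.abs
              (PowerSeries.coeff (R := ℂ) x.1 (f a) * PowerSeries.coeff (R := ℂ) x.2 (∏ i ∈ s, f i)) :=
            AbsoluteValue.sum_le _ _ _
        _ ≤ ∑ _x ∈ Finset.HasAntidiagonal.antidiagonal p,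
              (c a * (p : ℝ) ^ (α a)) * ((∏ i ∈ s, (((n : ℝ) + 1) * c i)) * (p : ℝ) ^ (∑ i ∈ s, α i)) := by
            refine Finset.sum_le_sum fun x hx => ?_
            rw [Finset.HasAntidiagonal.mem_antidiagonal] at hx
            have hx1 : x.1 ≤ p := by omega
            have hx2 : x.2 ≤ p := by omega
            rw [map_mul]
            have b1 : Complex.abs (PowerSeries.coeff (R := ℂ) x.1 (f a)) ≤ c a * (p : ℝ) ^ (α a) := by
              refine le_trans (h a (Finset.mem_cons_self a s) x.1 (by omega)) ?_
              exact mul_le_mul_of_nonneg_left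
                (Real.rpow_le_rpow (by positivity) (by exact_mod_cast hx1) hαa) hca
            have b2 : Complex.abs (PowerSeries.coeff (R := ℂ) x.2 (∏ i ∈ s, f i)) ≤
                (∏ i ∈ s, (((n : ℝ) + 1) * c i)) * (p : ℝ) ^ (∑ i ∈ s, α i) := by
              refine le_trans (ih (fun i hi => hc i (Finset.mem_cons_of_mem hi))
                (fun i hi => hα i (Finset.mem_cons_of_mem hi))
                (fun i hi => h i (Finset.mem_cons_of_mem hi)) x.2 (by omega)) ?_
              exact mul_le_mul_of_nonneg_left
                (Real.rpow_le_rpow (by positivity) (by exact_mod_cast hx2) hαs) hprod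
            exact mul_le_mul b1 b2 (Complex.abs.nonneg _) (by positivity)
        _ = ((p : ℝ) + 1) * ((c a * (p : ℝ) ^ (α a)) * ((∏ i ∈ s, (((n : ℝ) + 1) * c i)) * (p : ℝ) ^ (∑ i ∈ s, α i))) := by
            rw [Finset.sum_const, Finset.Nat.card_antidiagonal, nsmul_eq_mul]
            push_cast
            ring
        _ ≤ (((n : ℝ) + 1) * c a * ∏ i ∈ s, (((n : ℝ) + 1) * c i)) * (p : ℝ) ^ (α a + ∑ i ∈ s, α i) := by
            rw [Real.rpow_add_of_nonneg (by positivity) hαa hαs]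
            have hp1 : ((p : ℝ) + 1) ≤ ((n : ℝ) + 1) := by
              have : (p : ℝ) ≤ n := by exact_mod_cast hp
              linarith
            have hrw : (0:ℝ) ≤ (p : ℝ) ^ (α a) := by positivity
            have hrw2 : (0:ℝ) ≤ (p : ℝ) ^ (∑ i ∈ s, α i) := by positivity
            nlinarith [mul_le_mul_of_nonneg_right hp1 (by positivity : (0:ℝ) ≤ c a * (p : ℝ) ^ (α a) * ((∏ i ∈ s, (((n : ℝ) + 1) * c i)) * (p : ℝ) ^ (∑ i ∈ s, α i)))]

lemma cusp_coeff_le {a : ℕ → ℂ} {ℓ : ℕ} (h : IsDeligneCusp a ℓ) (j : ℕ) :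
    Complex.abs (a j) ≤ 2 * (j : ℝ) ^ ((ℓ : ℝ) / 2) := by
  rcases j with _ | j
  · rw [h.2.2.1]
    simp only [map_zero, Nat.cast_zero]
    rw [Real.zero_rpow (by have := h.2.1; positivity)]
    norm_num
  · exact h.2.2.2 _ (Nat.succ_le_succ (Nat.zero_le _))

lemma cusp_rpow_le {a : ℕ → ℂ} {ℓ : ℕ} (h : IsDeligneCusp a ℓ) {n j : ℕ} (hn : 1 ≤ n)
    (hj : j ≤ n - 1) : Complex.abs (a j) ≤ 2 * ((n : ℝ) - 1) ^ ((ℓ : ℝ) / 2) := by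
  refine le_trans (cusp_coeff_le h j) (mul_le_mul_of_nonneg_left ?_ (by norm_num))
  refine Real.rpow_le_rpow (by positivity) ?_ (by positivity)
  have : (j : ℝ) ≤ ((n - 1 : ℕ) : ℝ) := by exact_mod_cast hj
  refine le_trans this ?_
  have : ((n - 1 : ℕ) : ℝ) = (n : ℝ) - 1 := by
    have : 1 ≤ n := hn
    push_cast [Nat.cast_sub this]
    ring
  rw [this]

lemma pair_coeff_zero {a b : ℕ → ℂ} (ha : a 0 = 0) (hb : b 0 = 0) {x : ℕ} (hx : x < 2) :
    PowerSeries.coeff (R := ℂ) x (PowerSeries.mk a * PowerSeries.mk b) = 0 := by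
  rw [PowerSeries.coeff_mul]
  refine Finset.sum_eq_zero fun p hp => ?_
  rw [Finset.HasAntidiagonal.mem_antidiagonal] at hp
  rw [PowerSeries.coeff_mk, PowerSeries.coeff_mk]
  rcases Nat.eq_zero_or_pos p.1 with h1 | h1
  · rw [h1, ha, zero_mul]
  · have : p.2 = 0 := by omega
    rw [this, hb, mul_zero]

lemma pair_coeff_bound {a b : ℕ → ℂ} {la lb : ℕ} (ha : IsDeligneCusp a la)
    (hb : IsDeligneCusp b lb) {n : ℕ} (hn : 3 ≤ n) {x : ℕ} (hx : x ≤ n) :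
    Complex.abs (PowerSeries.coeff (R := ℂ) x (PowerSeries.mk a * PowerSeries.mk b)) ≤
      ((n : ℝ) + 1) * 4 * ((n : ℝ) - 1) ^ (((la : ℝ) + lb) / 2) := by
  have hn' : (3:ℝ) ≤ (n:ℝ) := by exact_mod_cast hn
  have hr : (0:ℝ) < (n:ℝ) - 1 := by linarith
  have hrp : (0:ℝ) ≤ 4 * ((n : ℝ) - 1) ^ (((la : ℝ) + lb) / 2) :=
    mul_nonneg (by norm_num) (Real.rpow_nonneg hr.le _)
  rw [PowerSeries.coeff_mul]
  have hbd : ∀ p : ℕ × ℕ, p ∈ Finset.HasAntidiagonal.antidiagonal x →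
      Complex.abs (PowerSeries.coeff (R := ℂ) p.1 (PowerSeries.mk a) *
        PowerSeries.coeff (R := ℂ) p.2 (PowerSeries.mk b)) ≤
      4 * ((n : ℝ) - 1) ^ (((la : ℝ) + lb) / 2) := by
    intro p hp
    rw [Finset.HasAntidiagonal.mem_antidiagonal] at hp
    rw [PowerSeries.coeff_mk, PowerSeries.coeff_mk, map_mul]
    rcases Nat.eq_zero_or_pos p.1 with h1 | h1
    · rw [h1, ha.2.2.1]
      simpa using hrp
    rcases Nat.eq_zero_or_pos p.2 with h2 | h2
    · rw [h2, hb.2.2.1]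
      simpa using hrp
    have hp1 : p.1 ≤ n - 1 := by omega
    have hp2 : p.2 ≤ n - 1 := by omega
    calc Complex.abs (a p.1) * Complex.abs (b p.2)
        ≤ (2 * ((n : ℝ) - 1) ^ ((la : ℝ) / 2)) * (2 * ((n : ℝ) - 1) ^ ((lb : ℝ) / 2)) := by
          exact mul_le_mul (cusp_rpow_le ha (by omega) hp1) (cusp_rpow_le hb (by omega) hp2)
            (Complex.abs.nonneg _) (mul_nonneg (by norm_num) (Real.rpow_nonneg hr.le _))
      _ = 4 * ((n : ℝ) - 1) ^ (((la : ℝ) + lb) / 2) := by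
          rw [show ((la : ℝ) + lb) / 2 = (la : ℝ) / 2 + (lb : ℝ) / 2 by ring,
            Real.rpow_add hr]
          ring
  calc Complex.abs (∑ p ∈ Finset.HasAntidiagonal.antidiagonal x, PowerSeries.coeff (R := ℂ) p.1 (PowerSeries.mk a) *
          PowerSeries.coeff (R := ℂ) p.2 (PowerSeries.mk b))
      ≤ ∑ p ∈ Finset.HasAntidiagonal.antidiagonal x, Complex.abs (PowerSeries.coeff (R := ℂ) p.1 (PowerSeries.mk a) *
          PowerSeries.coeff (R := ℂ) p.2 (PowerSeries.mk b)) := AbsoluteValue.sum_le _ _ _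
    _ ≤ ∑ _p ∈ Finset.HasAntidiagonal.antidiagonal x, 4 * ((n : ℝ) - 1) ^ (((la : ℝ) + lb) / 2) :=
        Finset.sum_le_sum hbd
    _ = ((x : ℝ) + 1) * (4 * ((n : ℝ) - 1) ^ (((la : ℝ) + lb) / 2)) := by
        rw [Finset.sum_const, Finset.Nat.card_antidiagonal, nsmul_eq_mul]
        push_cast; ring
    _ ≤ ((n : ℝ) + 1) * 4 * ((n : ℝ) - 1) ^ (((la : ℝ) + lb) / 2) := by
        have hxn : (x : ℝ) ≤ (n : ℝ) := by exact_mod_cast hx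
        nlinarith [hrp]

lemma cusp_prod_bound {m : ℕ} (a : Fin (m + 2) → ℕ → ℂ) (ℓ : Fin (m + 2) → ℕ)
    (h : ∀ j, IsDeligneCusp (a j) (ℓ j)) {n : ℕ} (hn : 3 ≤ n) {q : ℕ} (hq : q ≤ n) :
    Complex.abs (PowerSeries.coeff (R := ℂ) q (∏ j, PowerSeries.mk (a j))) ≤
      (((n : ℝ) + 1) ^ 2 * 4 * (((n : ℝ) + 1) * 2) ^ m) *
        ((n : ℝ) - 1) ^ (((∑ j, ℓ j : ℕ) : ℝ) / 2) := by
  have hn' : (3 : ℝ) ≤ (n : ℝ) := by exact_mod_cast hn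
  have hr : (0 : ℝ) < (n : ℝ) - 1 := by linarith
  -- split the product
  have hsplit : (∏ j, PowerSeries.mk (a j)) =
      (PowerSeries.mk (a 0) * PowerSeries.mk (a 1)) *
        ∏ j : Fin m, PowerSeries.mk (a j.succ.succ) := by
    rw [Fin.prod_univ_succ, Fin.prod_univ_succ, mul_assoc]
    rfl
  have hsumsplit : ((∑ j, ℓ j : ℕ) : ℝ) / 2 =
      ((ℓ 0 : ℝ) + (ℓ 1 : ℝ)) / 2 + ∑ j : Fin m, ((ℓ j.succ.succ : ℝ) / 2) := by
    rw [Fin.sum_univ_succ, Fin.sum_univ_succ, Fin.succ_zero_eq_one]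
    push_cast
    rw [← Finset.sum_div]
    ring
  -- bound on the rest
  have hrest : ∀ y : ℕ, y ≤ n → Complex.abs (PowerSeries.coeff (R := ℂ) y
      (∏ j : Fin m, PowerSeries.mk (a j.succ.succ))) ≤
      (((n : ℝ) + 1) * 2) ^ m * (y : ℝ) ^ (∑ j : Fin m, ((ℓ j.succ.succ : ℝ) / 2)) := by
    intro y hy
    have := coeff_prod_le n Finset.univ (fun j : Fin m => PowerSeries.mk (a j.succ.succ))
      (fun _ => 2) (fun j => (ℓ j.succ.succ : ℝ) / 2)
      (fun _ _ => by norm_num) (fun j _ => by positivity)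
      (fun j _ x _ => by
        rw [PowerSeries.coeff_mk]
        exact cusp_coeff_le (h _) x) y hy
    simpa [Finset.prod_const, Finset.card_univ] using this
  rw [hsplit, PowerSeries.coeff_mul, hsumsplit]
  set E1 : ℝ := ((ℓ 0 : ℝ) + (ℓ 1 : ℝ)) / 2 with hE1
  set E2 : ℝ := ∑ j : Fin m, ((ℓ j.succ.succ : ℝ) / 2) with hE2
  have hE2nn : 0 ≤ E2 := Finset.sum_nonneg fun j _ => by positivity
  have hbd : ∀ p : ℕ × ℕ, p ∈ Finset.HasAntidiagonal.antidiagonal q →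
      Complex.abs (PowerSeries.coeff (R := ℂ) p.1 (PowerSeries.mk (a 0) * PowerSeries.mk (a 1)) *
        PowerSeries.coeff (R := ℂ) p.2 (∏ j : Fin m, PowerSeries.mk (a j.succ.succ))) ≤
      (((n : ℝ) + 1) * 4 * (((n : ℝ) + 1) * 2) ^ m) * ((n : ℝ) - 1) ^ (E1 + E2) := by
    intro p hp
    rw [Finset.HasAntidiagonal.mem_antidiagonal] at hp
    rcases Nat.lt_or_ge p.1 2 with h2 | h2
    · rw [pair_coeff_zero (h 0).2.2.1 (h 1).2.2.1 h2, zero_mul, map_zero]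
      have : (0:ℝ) ≤ ((n : ℝ) - 1) ^ (E1 + E2) := Real.rpow_nonneg hr.le _
      positivity
    · have hp2 : p.2 ≤ n - 2 := by omega
      have hp2' : (p.2 : ℝ) ≤ (n : ℝ) - 1 := by
        have : (p.2 : ℝ) ≤ ((n - 2 : ℕ) : ℝ) := by exact_mod_cast hp2
        have h2' : ((n - 2 : ℕ) : ℝ) = (n : ℝ) - 2 := by
          have : 2 ≤ n := by omega
          push_cast [Nat.cast_sub this]
          ring
        rw [h2'] at this
        linarith
      rw [map_mul]
      have b1 := pair_coeff_bound (h 0) (h 1) hn (show p.1 ≤ n by omega)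
      have b2 : Complex.abs (PowerSeries.coeff (R := ℂ) p.2
          (∏ j : Fin m, PowerSeries.mk (a j.succ.succ))) ≤
          (((n : ℝ) + 1) * 2) ^ m * ((n : ℝ) - 1) ^ E2 := by
        refine le_trans (hrest p.2 (by omega)) ?_
        refine mul_le_mul_of_nonneg_left ?_ (by positivity)
        exact Real.rpow_le_rpow (by positivity) hp2' hE2nn
      calc Complex.abs (PowerSeries.coeff (R := ℂ) p.1 (PowerSeries.mk (a 0) * PowerSeries.mk (a 1))) *
            Complex.abs (PowerSeries.coeff (R := ℂ) p.2 (∏ j : Fin m, PowerSeries.mk (a j.succ.succ)))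
          ≤ (((n : ℝ) + 1) * 4 * ((n : ℝ) - 1) ^ E1) *
              ((((n : ℝ) + 1) * 2) ^ m * ((n : ℝ) - 1) ^ E2) := by
            refine mul_le_mul b1 b2 (Complex.abs.nonneg _) ?_
            have : (0:ℝ) ≤ ((n : ℝ) - 1) ^ E1 := Real.rpow_nonneg hr.le _
            positivity
        _ = (((n : ℝ) + 1) * 4 * (((n : ℝ) + 1) * 2) ^ m) * ((n : ℝ) - 1) ^ (E1 + E2) := by
            rw [Real.rpow_add hr]
            ring
  calc Complex.abs (∑ p ∈ Finset.HasAntidiagonal.antidiagonal q, _) 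
      ≤ ∑ p ∈ Finset.HasAntidiagonal.antidiagonal q, Complex.abs
          (PowerSeries.coeff (R := ℂ) p.1 (PowerSeries.mk (a 0) * PowerSeries.mk (a 1)) *
           PowerSeries.coeff (R := ℂ) p.2 (∏ j : Fin m, PowerSeries.mk (a j.succ.succ))) :=
        AbsoluteValue.sum_le _ _ _
    _ ≤ ∑ _p ∈ Finset.HasAntidiagonal.antidiagonal q,
          (((n : ℝ) + 1) * 4 * (((n : ℝ) + 1) * 2) ^ m) * ((n : ℝ) - 1) ^ (E1 + E2) :=
        Finset.sum_le_sum hbd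
    _ = ((q : ℝ) + 1) * ((((n : ℝ) + 1) * 4 * (((n : ℝ) + 1) * 2) ^ m) * ((n : ℝ) - 1) ^ (E1 + E2)) := by
        rw [Finset.sum_const, Finset.Nat.card_antidiagonal, nsmul_eq_mul]
        push_cast; ring
    _ ≤ ((n : ℝ) + 1) * ((((n : ℝ) + 1) * 4 * (((n : ℝ) + 1) * 2) ^ m) * ((n : ℝ) - 1) ^ (E1 + E2)) := by
        have hq' : (q : ℝ) ≤ (n : ℝ) := by exact_mod_cast hq
        have h0 : (0:ℝ) ≤ ((n : ℝ) - 1) ^ (E1 + E2) := Real.rpow_nonneg hr.le _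
        have h1 : (0:ℝ) ≤ (((n : ℝ) + 1) * 2) ^ m := by positivity
        refine mul_le_mul_of_nonneg_right (by linarith) ?_
        have h2 : (0:ℝ) ≤ ((n : ℝ) + 1) * 4 := by linarith
        exact mul_nonneg (mul_nonneg h2 h1) h0
    _ = (((n : ℝ) + 1) ^ 2 * 4 * (((n : ℝ) + 1) * 2) ^ m) * ((n : ℝ) - 1) ^ (E1 + E2) := by
        ring

lemma final_bound (n : ℕ) (hn : 3 ≤ n) (D : ℝ) (hD : 2 ≤ D) :
    ∃ M : ℝ, 0 ≤ M ∧ ∀ K L : ℕ, M < (K : ℝ) + L →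
      (D * (((n : ℝ) - 1) / n) ^ ((L : ℝ) / 2) ≤ (n : ℝ) ^ ((K : ℝ) / 2 - 1)) ∧
      (4 ≤ K → 2 + D * (((n : ℝ) - 1) / n) ^ ((L : ℝ) / 2) ≤ (n : ℝ) ^ ((K : ℝ) / 2 - 1)) := by
  have hn' : (3 : ℝ) ≤ (n : ℝ) := by exact_mod_cast hn
  set r : ℝ := ((n : ℝ) - 1) / n with hrdef
  have hr0 : 0 < r := by
    apply div_pos <;> linarith
  have hr1 : r < 1 := by
    rw [hrdef, div_lt_one (by linarith)]
    linarith
  have hn1 : (1 : ℝ) < (n : ℝ) := by linarith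
  set M1 : ℝ := 4 * (1 + Real.logb n (D + 2)) with hM1
  set M2 : ℝ := 4 * Real.logb r (1 / ((n : ℝ) * D)) with hM2
  have hM1nonneg : 0 ≤ M1 := by
    have := Real.logb_nonneg hn1 (by linarith : (1:ℝ) ≤ D + 2)
    rw [hM1]; linarith
  refine ⟨max M1 M2, le_trans hM1nonneg (le_max_left _ _), ?_⟩
  intro K L hKL
  have hcases : M1 / 2 < (K : ℝ) ∨ M2 / 2 < (L : ℝ) := by
    by_contra hcon
    push_neg at hcon
    have h1 := le_max_left M1 M2
    have h2 := le_max_right M1 M2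
    have : (K : ℝ) + L ≤ M1 / 2 + M2 / 2 := by linarith [hcon.1, hcon.2]
    have : M1 / 2 + M2 / 2 ≤ max M1 M2 := by
      rcases le_total M1 M2 with h | h <;> [linarith; linarith]
    linarith
  have hrL1 : r ^ ((L : ℝ) / 2) ≤ 1 :=
    Real.rpow_le_one hr0.le hr1.le (by positivity)
  have hrLpos : 0 < r ^ ((L : ℝ) / 2) := Real.rpow_pos_of_pos hr0 _
  rcases hcases with hK | hL
  · -- n ^ (K/2 - 1) ≥ D + 2
    have hexp : Real.logb n (D + 2) ≤ (K : ℝ) / 2 - 1 := by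
      rw [hM1] at hK; linarith
    have : D + 2 ≤ (n : ℝ) ^ ((K : ℝ) / 2 - 1) := by
      calc D + 2 = (n : ℝ) ^ Real.logb n (D + 2) :=
            (Real.rpow_logb (by linarith) (by linarith) (by linarith)).symm
        _ ≤ (n : ℝ) ^ ((K : ℝ) / 2 - 1) :=
            Real.rpow_le_rpow_of_exponent_le hn1.le hexp
    constructor
    · nlinarith
    · intro _; nlinarith
  · -- r ^ (L/2) ≤ 1/(n D)
    have hx : (0 : ℝ) < 1 / ((n : ℝ) * D) := by positivity
    have hrM2 : r ^ (M2 / 4) = 1 / ((n : ℝ) * D) := by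
      rw [hM2, show 4 * Real.logb r (1 / ((n : ℝ) * D)) / 4 = Real.logb r (1 / ((n : ℝ) * D)) by ring]
      exact Real.rpow_logb hr0 (ne_of_lt hr1) hx
    have hmono : r ^ ((L : ℝ) / 2) ≤ r ^ (M2 / 4) :=
      Real.rpow_le_rpow_of_exponent_ge hr0 hr1.le (by linarith)
    have hsmall : D * r ^ ((L : ℝ) / 2) ≤ 1 / (n : ℝ) := by
      calc D * r ^ ((L : ℝ) / 2) ≤ D * (1 / ((n : ℝ) * D)) := by
            rw [← hrM2]; exact mul_le_mul_of_nonneg_left hmono (by linarith)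
        _ = 1 / (n : ℝ) := by field_simp
    constructor
    · calc D * r ^ ((L : ℝ) / 2) ≤ 1 / (n : ℝ) := hsmall
        _ = (n : ℝ) ^ (-1 : ℝ) := by rw [Real.rpow_neg_one]; norm_num
        _ ≤ (n : ℝ) ^ ((K : ℝ) / 2 - 1) := by
            refine Real.rpow_le_rpow_of_exponent_le hn1.le ?_
            have : (0 : ℝ) ≤ (K : ℝ) := Nat.cast_nonneg _
            linarith
    · intro hK4
      have hK4' : (4 : ℝ) ≤ (K : ℝ) := by exact_mod_cast hK4
      have : (n : ℝ) ≤ (n : ℝ) ^ ((K : ℝ) / 2 - 1) := by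
        calc (n : ℝ) = (n : ℝ) ^ (1 : ℝ) := (Real.rpow_one _).symm
          _ ≤ (n : ℝ) ^ ((K : ℝ) / 2 - 1) :=
              Real.rpow_le_rpow_of_exponent_le hn1.le (by linarith)
      have h1n : 1 / (n : ℝ) ≤ 1 := by
        rw [div_le_one (by linarith)]; linarith
      linarith

set_option maxHeartbeats 1000000 in
/-- Fix `n ≥ 3` and `m_P + m_F ≥ 2`. There is a bound `M` (depending only on `n`, `m_P`,
`m_F`) such that for any product of `m_P` Eisenstein `q`-expansions of even weights `≥ 4`
and `m_F` Deligne-bounded cusp sequences, if the total weight `ℓ` exceeds `M` then the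
`n`-th coefficient of the product has absolute value at most `n^(ℓ/2 - 1)`. -/
theorem eis_cusp_product_coeff_small (n : ℕ) (hn : 3 ≤ n) (mP mF : ℕ)
    (hm : 2 ≤ mP + mF) :
    ∃ M : ℝ, ∀ (k : Fin mP → ℕ), (∀ i, Even (k i) ∧ 4 ≤ k i) →
      ∀ (a : Fin mF → ℕ → ℂ) (ℓ : Fin mF → ℕ),
        (∀ j, IsDeligneCusp (a j) (ℓ j)) →
        M < (((∑ i, k i) + ∑ j, ℓ j : ℕ) : ℝ) →
        ‖PowerSeries.coeff (R := ℂ) n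
            ((∏ i, eisPS (k i)) * ∏ j, PowerSeries.mk (a j))‖ ≤
          (n : ℝ) ^ ((((∑ i, k i) + ∑ j, ℓ j : ℕ) : ℝ) / 2 - 1) := by
  have hn1 : 1 ≤ n := by omega
  have hnr : (3 : ℝ) ≤ (n : ℝ) := by exact_mod_cast hn
  have hnpos : (0 : ℝ) < (n : ℝ) := by linarith
  have hr : (0 : ℝ) < (n : ℝ) - 1 := by linarith
  obtain ⟨CE, hCEdef⟩ : ∃ x : ℝ, x = (((n : ℝ) + 1) * eisBound n) ^ mP := ⟨_, rfl⟩
  have hCE1 : 1 ≤ CE := by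
    rw [hCEdef]
    refine one_le_pow₀ ?_
    nlinarith [one_le_eisBound n]
  obtain ⟨CF, hCFdef⟩ : ∃ x : ℝ, x = ((n : ℝ) + 1) ^ 2 * 4 * (((n : ℝ) + 1) * 2) ^ mF :=
    ⟨_, rfl⟩
  have hCF0 : 0 ≤ CF := by rw [hCFdef]; positivity
  obtain ⟨D, hDdef⟩ : ∃ x : ℝ,
      x = 2 + CE + ((n : ℝ) + 1) * 2 * CE + ((n : ℝ) + 1) * CE * CF := ⟨_, rfl⟩
  have hnonneg1 : 0 ≤ ((n : ℝ) + 1) * 2 * CE := by nlinarith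
  have hnonneg2 : 0 ≤ ((n : ℝ) + 1) * CE * CF := by nlinarith
  have hD2 : 2 ≤ D := by rw [hDdef]; linarith
  obtain ⟨M, hM0, hMspec⟩ := final_bound n hn D hD2
  refine ⟨M, ?_⟩
  intro k hk a ℓ ha hMlt
  have hcast : M < ((∑ i, k i : ℕ) : ℝ) + ((∑ j, ℓ j : ℕ) : ℝ) := by
    push_cast at hMlt ⊢; linarith
  obtain ⟨part1, part2⟩ := hMspec (∑ i, k i) (∑ j, ℓ j) hcast
  -- bound for coefficients of the Eisenstein part
  have EB : ∀ p : ℕ, p ≤ n →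
      Complex.abs (PowerSeries.coeff (R := ℂ) p (∏ i, eisPS (k i))) ≤ CE := by
    intro p hp
    have := coeff_prod_le n Finset.univ (fun i => eisPS (k i)) (fun _ => eisBound n)
      (fun _ => 0) (fun i _ => le_trans zero_le_one (one_le_eisBound n))
      (fun i _ => le_refl 0)
      (fun i _ j hj => by
        rw [Real.rpow_zero, mul_one]
        exact abs_coeff_eisPS_le n hn1 (k i) (hk i).2 j hj) p hp
    simpa [Finset.prod_const, Finset.card_univ, Real.rpow_zero, hCEdef] using this
  have E0 : PowerSeries.coeff (R := ℂ) 0 (∏ i, eisPS (k i)) = 1 := by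
    rw [PowerSeries.coeff_zero_eq_constantCoeff, map_prod]
    refine Finset.prod_eq_one fun i _ => ?_
    simp [eisPS]
  -- target splitting
  have htar : (n : ℝ) ^ ((((∑ i, k i) + ∑ j, ℓ j : ℕ) : ℝ) / 2 - 1) =
      (n : ℝ) ^ (((∑ j, ℓ j : ℕ) : ℝ) / 2) * (n : ℝ) ^ (((∑ i, k i : ℕ) : ℝ) / 2 - 1) := by
    rw [← Real.rpow_add hnpos]
    congr 1
    push_cast
    ring
  have hLpow : (((n : ℝ) - 1) / n) ^ (((∑ j, ℓ j : ℕ) : ℝ) / 2) *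
      (n : ℝ) ^ (((∑ j, ℓ j : ℕ) : ℝ) / 2) = ((n : ℝ) - 1) ^ (((∑ j, ℓ j : ℕ) : ℝ) / 2) := by
    rw [← Real.mul_rpow (by positivity) (by positivity)]
    congr 1
    field_simp
  have hLpos : (0 : ℝ) < (n : ℝ) ^ (((∑ j, ℓ j : ℕ) : ℝ) / 2) := Real.rpow_pos_of_pos hnpos _
  -- case split on mF
  rcases Nat.lt_or_ge mF 2 with h2 | h2
  · rcases Nat.lt_or_ge mF 1 with h1 | h1
    · -- mF = 0
      have hmF : mF = 0 := by omega
      subst hmF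
      have hL0 : (∑ j : Fin 0, ℓ j) = 0 := rfl
      rw [hL0] at part1 ⊢
      rw [Fin.prod_univ_zero, mul_one]
      rw [Nat.cast_zero, zero_div, Real.rpow_zero, mul_one] at part1
      calc Complex.abs (PowerSeries.coeff (R := ℂ) n (∏ i, eisPS (k i))) ≤ CE := EB n le_rfl
        _ ≤ D := by rw [hDdef]; linarith
        _ ≤ (n : ℝ) ^ (((∑ i, k i : ℕ) : ℝ) / 2 - 1) := part1
        _ = (n : ℝ) ^ ((((∑ i, k i) + 0 : ℕ) : ℝ) / 2 - 1) := by norm_num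
    · -- mF = 1
      have hmF : mF = 1 := by omega
      subst hmF
      have hmP : 1 ≤ mP := by omega
      have hK4 : 4 ≤ ∑ i, k i := by
        have i0 : Fin mP := ⟨0, by omega⟩
        exact le_trans (hk i0).2
          (Finset.single_le_sum (f := k) (fun i _ => Nat.zero_le _) (Finset.mem_univ i0))
      have hP2 := part2 hK4
      rw [Fin.prod_univ_one]
      rw [PowerSeries.coeff_mul]
      have hmem : ((0 : ℕ), n) ∈ Finset.HasAntidiagonal.antidiagonal n := by
        simp
      have hsum := (Finset.add_sum_erase _ (fun p : ℕ × ℕ =>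
        PowerSeries.coeff (R := ℂ) p.1 (∏ i, eisPS (k i)) *
          PowerSeries.coeff (R := ℂ) p.2 (PowerSeries.mk (a 0))) hmem).symm
      rw [hsum]
      have hL1 : (∑ j : Fin 1, ℓ j) = ℓ 0 := by rw [Fin.sum_univ_one]
      -- bound the special term
      have hterm0 : Complex.abs (PowerSeries.coeff (R := ℂ) 0 (∏ i, eisPS (k i)) *
          PowerSeries.coeff (R := ℂ) n (PowerSeries.mk (a 0))) ≤
          2 * (n : ℝ) ^ (((∑ j : Fin 1, ℓ j : ℕ) : ℝ) / 2) := by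
        rw [E0, one_mul, PowerSeries.coeff_mk, hL1]
        exact cusp_coeff_le (ha 0) n
      -- bound the other terms
      have hother : ∀ p : ℕ × ℕ, p ∈ (Finset.HasAntidiagonal.antidiagonal n).erase (0, n) →
          Complex.abs (PowerSeries.coeff (R := ℂ) p.1 (∏ i, eisPS (k i)) *
            PowerSeries.coeff (R := ℂ) p.2 (PowerSeries.mk (a 0))) ≤
          CE * (2 * ((n : ℝ) - 1) ^ (((∑ j : Fin 1, ℓ j : ℕ) : ℝ) / 2)) := by
        intro p hp
        obtain ⟨hne, hpmem⟩ := Finset.mem_erase.mp hp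
        rw [Finset.HasAntidiagonal.mem_antidiagonal] at hpmem
        have hne' : ¬(p.1 = 0 ∧ p.2 = n) := fun h => hne (Prod.ext h.1 h.2)
        have hp2 : p.2 ≤ n - 1 := by omega
        rw [map_mul, PowerSeries.coeff_mk, hL1]
        have hb1 := EB p.1 (by omega)
        have hb2 := cusp_rpow_le (ha 0) hn1 hp2
        refine mul_le_mul hb1 hb2 (Complex.abs.nonneg _) (by linarith)
      have hcard : ((Finset.HasAntidiagonal.antidiagonal n).erase (0, n)).card ≤ n + 1 := by
        calc ((Finset.HasAntidiagonal.antidiagonal n).erase (0, n)).card ≤ (Finset.HasAntidiagonal.antidiagonal n).card :=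
              Finset.card_le_card (Finset.erase_subset _ _)
          _ = n + 1 := Finset.Nat.card_antidiagonal n
      have hsumother : Complex.abs (∑ p ∈ (Finset.HasAntidiagonal.antidiagonal n).erase (0, n),
          PowerSeries.coeff (R := ℂ) p.1 (∏ i, eisPS (k i)) *
            PowerSeries.coeff (R := ℂ) p.2 (PowerSeries.mk (a 0))) ≤
          ((n : ℝ) + 1) * (CE * (2 * ((n : ℝ) - 1) ^ (((∑ j : Fin 1, ℓ j : ℕ) : ℝ) / 2))) := by
        calc Complex.abs (∑ p ∈ (Finset.HasAntidiagonal.antidiagonal n).erase (0, n), _)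
            ≤ ∑ p ∈ (Finset.HasAntidiagonal.antidiagonal n).erase (0, n), Complex.abs
                (PowerSeries.coeff (R := ℂ) p.1 (∏ i, eisPS (k i)) *
                  PowerSeries.coeff (R := ℂ) p.2 (PowerSeries.mk (a 0))) := AbsoluteValue.sum_le _ _ _
          _ ≤ ∑ _p ∈ (Finset.HasAntidiagonal.antidiagonal n).erase (0, n),
                CE * (2 * ((n : ℝ) - 1) ^ (((∑ j : Fin 1, ℓ j : ℕ) : ℝ) / 2)) :=
              Finset.sum_le_sum hother
          _ = (((Finset.HasAntidiagonal.antidiagonal n).erase (0, n)).card : ℝ) *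
                (CE * (2 * ((n : ℝ) - 1) ^ (((∑ j : Fin 1, ℓ j : ℕ) : ℝ) / 2))) := by
              rw [Finset.sum_const, nsmul_eq_mul]
          _ ≤ ((n : ℝ) + 1) * (CE * (2 * ((n : ℝ) - 1) ^ (((∑ j : Fin 1, ℓ j : ℕ) : ℝ) / 2))) := by
              have h1 : (((Finset.HasAntidiagonal.antidiagonal n).erase (0, n)).card : ℝ) ≤ (n : ℝ) + 1 := by
                exact_mod_cast hcard
              have h0 : (0:ℝ) ≤ CE * (2 * ((n : ℝ) - 1) ^ (((∑ j : Fin 1, ℓ j : ℕ) : ℝ) / 2)) := by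
                have := Real.rpow_nonneg hr.le ((((∑ j : Fin 1, ℓ j : ℕ) : ℝ)) / 2)
                nlinarith
              exact mul_le_mul_of_nonneg_right h1 h0
      -- put together
      set Lr : ℝ := ((∑ j : Fin 1, ℓ j : ℕ) : ℝ) with hLr
      calc Complex.abs (PowerSeries.coeff (R := ℂ) 0 (∏ i, eisPS (k i)) *
              PowerSeries.coeff (R := ℂ) n (PowerSeries.mk (a 0)) +
            ∑ p ∈ (Finset.HasAntidiagonal.antidiagonal n).erase (0, n),
              PowerSeries.coeff (R := ℂ) p.1 (∏ i, eisPS (k i)) *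
                PowerSeries.coeff (R := ℂ) p.2 (PowerSeries.mk (a 0)))
          ≤ 2 * (n : ℝ) ^ (Lr / 2) +
            ((n : ℝ) + 1) * (CE * (2 * ((n : ℝ) - 1) ^ (Lr / 2))) := by
            refine le_trans (Complex.abs.add_le _ _) ?_
            exact add_le_add hterm0 hsumother
        _ ≤ (2 + D * (((n : ℝ) - 1) / n) ^ (Lr / 2)) * (n : ℝ) ^ (Lr / 2) := by
            have hgain : ((n : ℝ) - 1) ^ (Lr / 2) =
                (((n : ℝ) - 1) / n) ^ (Lr / 2) * (n : ℝ) ^ (Lr / 2) := hLpow.symm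
            rw [hgain]
            have hDge : ((n : ℝ) + 1) * 2 * CE ≤ D := by rw [hDdef]; linarith
            have hq0 : (0:ℝ) ≤ (((n : ℝ) - 1) / n) ^ (Lr / 2) := by positivity
            have key := mul_le_mul_of_nonneg_right
              (mul_le_mul_of_nonneg_right hDge hq0) hLpos.le
            nlinarith [key]
        _ ≤ (n : ℝ) ^ (((∑ i, k i : ℕ) : ℝ) / 2 - 1) * (n : ℝ) ^ (Lr / 2) :=
            mul_le_mul_of_nonneg_right hP2 hLpos.le
        _ = (n : ℝ) ^ ((((∑ i, k i) + ∑ j : Fin 1, ℓ j : ℕ) : ℝ) / 2 - 1) := by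
            rw [htar]; ring
  · -- mF ≥ 2
    obtain ⟨m, rfl⟩ : ∃ m, mF = m + 2 := ⟨mF - 2, by omega⟩
    rw [PowerSeries.coeff_mul]
    have hCFm : (((n : ℝ) + 1) ^ 2 * 4 * (((n : ℝ) + 1) * 2) ^ m) ≤ CF := by
      rw [hCFdef]
      have : (((n : ℝ) + 1) * 2) ^ m ≤ (((n : ℝ) + 1) * 2) ^ (m + 2) := by
        refine pow_le_pow_right₀ ?_ (by omega)
        linarith
      nlinarith
    have hRnn : (0:ℝ) ≤ ((n : ℝ) - 1) ^ (((∑ j : Fin (m+2), ℓ j : ℕ) : ℝ) / 2) :=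
      Real.rpow_nonneg hr.le _
    have hbd : ∀ p : ℕ × ℕ, p ∈ Finset.HasAntidiagonal.antidiagonal n →
        Complex.abs (PowerSeries.coeff (R := ℂ) p.1 (∏ i, eisPS (k i)) *
          PowerSeries.coeff (R := ℂ) p.2 (∏ j, PowerSeries.mk (a j))) ≤
        CE * (CF * ((n : ℝ) - 1) ^ (((∑ j : Fin (m+2), ℓ j : ℕ) : ℝ) / 2)) := by
      intro p hp
      rw [Finset.HasAntidiagonal.mem_antidiagonal] at hp
      rw [map_mul]
      have hb1 := EB p.1 (by omega)
      have hb2 : Complex.abs (PowerSeries.coeff (R := ℂ) p.2 (∏ j, PowerSeries.mk (a j))) ≤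
          CF * ((n : ℝ) - 1) ^ (((∑ j : Fin (m+2), ℓ j : ℕ) : ℝ) / 2) := by
        refine le_trans (cusp_prod_bound a ℓ ha hn (by omega)) ?_
        exact mul_le_mul_of_nonneg_right hCFm hRnn
      refine mul_le_mul hb1 hb2 (Complex.abs.nonneg _) (by linarith)
    calc Complex.abs (∑ p ∈ Finset.HasAntidiagonal.antidiagonal n,
            PowerSeries.coeff (R := ℂ) p.1 (∏ i, eisPS (k i)) *
              PowerSeries.coeff (R := ℂ) p.2 (∏ j, PowerSeries.mk (a j)))
        ≤ ∑ p ∈ Finset.HasAntidiagonal.antidiagonal n, Complex.abs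
            (PowerSeries.coeff (R := ℂ) p.1 (∏ i, eisPS (k i)) *
              PowerSeries.coeff (R := ℂ) p.2 (∏ j, PowerSeries.mk (a j))) := AbsoluteValue.sum_le _ _ _
      _ ≤ ∑ _p ∈ Finset.HasAntidiagonal.antidiagonal n,
            CE * (CF * ((n : ℝ) - 1) ^ (((∑ j : Fin (m+2), ℓ j : ℕ) : ℝ) / 2)) :=
          Finset.sum_le_sum hbd
      _ = ((n : ℝ) + 1) * (CE * (CF * ((n : ℝ) - 1) ^ (((∑ j : Fin (m+2), ℓ j : ℕ) : ℝ) / 2))) := by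
          rw [Finset.sum_const, Finset.Nat.card_antidiagonal, nsmul_eq_mul]
          push_cast; ring
      _ ≤ D * ((n : ℝ) - 1) ^ (((∑ j : Fin (m+2), ℓ j : ℕ) : ℝ) / 2) := by
          have hDge : ((n : ℝ) + 1) * CE * CF ≤ D := by rw [hDdef]; linarith
          nlinarith
      _ = D * (((n : ℝ) - 1) / n) ^ (((∑ j : Fin (m+2), ℓ j : ℕ) : ℝ) / 2) *
            (n : ℝ) ^ (((∑ j : Fin (m+2), ℓ j : ℕ) : ℝ) / 2) := by
          rw [mul_assoc, hLpow]
      _ ≤ (n : ℝ) ^ (((∑ i, k i : ℕ) : ℝ) / 2 - 1) *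
            (n : ℝ) ^ (((∑ j : Fin (m+2), ℓ j : ℕ) : ℝ) / 2) :=
          mul_le_mul_of_nonneg_right part1 hLpos.le
      _ = (n : ℝ) ^ ((((∑ i, k i) + ∑ j : Fin (m+2), ℓ j : ℕ) : ℝ) / 2 - 1) := by
          rw [htar]; ring
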